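/- Let k be a field of characteristic p, X a 2×2 matrix of variables, m the homogeneous maximal ideal of k[X], and I_2(X) the principal ideal generated by the determinant. For q a power of p and s a real number with 0 < s ≤ 1 and sq an integer, the k-vector space dimension of k[X]/(m^{sq} + m^{[q]} + I_2(X)) equals (s^3/3)q^3 + (s^2/2)q^2 + (s/6)q. -/

import Mathlib

set_option maxHeartbeats 1000000

open MvPolynomial Finsupp Pointwise

namespace Stmt15Aux

noncomputable section

abbrev σ2 := Fin 2 × Fin 2

variable (k : Type*) [Field k]

abbrev Rk := MvPolynomial σ2 k

/-- total degree of an exponent vector -/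
def dd (a : σ2 →₀ ℕ) : ℕ := a.sum fun _ m => m
/-- first invariant -/
def ii (a : σ2 →₀ ℕ) : ℕ := a (0,0) + a (0,1)
/-- second invariant -/
def jj (a : σ2 →₀ ℕ) : ℕ := a (0,0) + a (1,0)

lemma dd_eq (a : σ2 →₀ ℕ) : dd a = a (0,0) + a (0,1) + a (1,0) + a (1,1) := by
  rw [dd, Finsupp.sum_fintype _ _ (fun _ => rfl)]
  rw [Fintype.sum_prod_type]
  simp [Fin.sum_univ_two]
  ring

lemma dd_add (a b : σ2 →₀ ℕ) : dd (a + b) = dd a + dd b := by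
  simp [dd_eq, Finsupp.add_apply]; ring

lemma ii_add (a b : σ2 →₀ ℕ) : ii (a + b) = ii a + ii b := by
  simp [ii, Finsupp.add_apply]; ring

lemma jj_add (a b : σ2 →₀ ℕ) : jj (a + b) = jj a + jj b := by
  simp [jj, Finsupp.add_apply]; ring

lemma dd_single (v : σ2) (m : ℕ) : dd (Finsupp.single v m) = m := by
  obtain ⟨x, y⟩ := v
  fin_cases x <;> fin_cases y <;>
    simp [dd_eq, Finsupp.single_apply, Prod.ext_iff, Fin.ext_iff]

lemma ii_le_dd (a : σ2 →₀ ℕ) : ii a ≤ dd a := by rw [dd_eq, ii]; omega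

lemma jj_le_dd (a : σ2 →₀ ℕ) : jj a ≤ dd a := by rw [dd_eq, jj]; omega

variable (n : ℕ)

/-- index type for the monomial basis of the quotient -/
def W := {t : ℕ × ℕ × ℕ // t.1 < n ∧ t.2.1 ≤ t.1 ∧ t.2.2 ≤ t.1}

variable {n} in
def mkW (a : σ2 →₀ ℕ) (h : dd a < n) : W n :=
  ⟨(dd a, ii a, jj a), h, ii_le_dd a, jj_le_dd a⟩

/-- image of the basis monomials -/
def tgt (a : σ2 →₀ ℕ) : W n →₀ k :=
  if h : dd a < n then Finsupp.single (mkW a h) 1 else 0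

lemma tgt_congr {a b : σ2 →₀ ℕ} (h1 : dd a = dd b) (h2 : ii a = ii b)
    (h3 : jj a = jj b) : tgt k n a = tgt k n b := by
  simp only [tgt, mkW, h1, h2, h3]

lemma tgt_of_le {a : σ2 →₀ ℕ} (h : n ≤ dd a) : tgt k n a = 0 := by
  rw [tgt, dif_neg (not_lt.mpr h)]

/-- the normal-form linear map -/
def Φ : Rk k →ₗ[k] (W n →₀ k) :=
  (basisMonomials σ2 k).constr k (tgt k n)

lemma Phi_monomial (a : σ2 →₀ ℕ) (c : k) :
    Φ k n (monomial a c) = c • tgt k n a := by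
  have : (monomial a c : Rk k) = c • (basisMonomials σ2 k a) := by
    rw [coe_basisMonomials]
    simp [smul_monomial]
  rw [Φ, this, map_smul, Module.Basis.constr_basis]

lemma Phi_monomial_of_le {a : σ2 →₀ ℕ} (h : n ≤ dd a) (c : k) :
    Φ k n (monomial a c) = 0 := by
  rw [Phi_monomial, tgt_of_le k n h, smul_zero]

lemma Phi_monomial_of_lt {a : σ2 →₀ ℕ} (h : dd a < n) (c : k) :
    Φ k n (monomial a c) = Finsupp.single (mkW a h) c := by
  rw [Phi_monomial, tgt, dif_pos h, Finsupp.smul_single, smul_eq_mul, mul_one]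

/-- The determinant. -/
def D : Rk k := X (0,0) * X (1,1) - X (0,1) * X (1,0)

lemma X_mul_X (v w : σ2) :
    (X v * X w : Rk k) = monomial (Finsupp.single v 1 + Finsupp.single w 1) 1 := by
  simp only [X, monomial_mul, one_mul]

lemma Phi_mul_monomial {b : σ2 →₀ ℕ} (hb : n ≤ dd b) (c : k) (r : Rk k) :
    Φ k n (r * monomial b c) = 0 := by
  induction r using MvPolynomial.induction_on' with
  | monomial u a =>
    rw [monomial_mul]
    exact Phi_monomial_of_le k n (by rw [dd_add]; omega) _
  | add p q hp hq => rw [add_mul, map_add, hp, hq, add_zero]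

lemma ii_single (v : σ2) (m : ℕ) : ii (Finsupp.single v m) = if v.1 = 0 then m else 0 := by
  obtain ⟨x, y⟩ := v
  fin_cases x <;> fin_cases y <;>
    simp [ii, Finsupp.single_apply, Prod.ext_iff, Fin.ext_iff]

lemma jj_single (v : σ2) (m : ℕ) : jj (Finsupp.single v m) = if v.2 = 0 then m else 0 := by
  obtain ⟨x, y⟩ := v
  fin_cases x <;> fin_cases y <;>
    simp [jj, Finsupp.single_apply, Prod.ext_iff, Fin.ext_iff]

lemma Phi_mul_D (r : Rk k) : Φ k n (r * D k) = 0 := by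
  induction r using MvPolynomial.induction_on' with
  | monomial u a =>
    set b1 : σ2 →₀ ℕ := Finsupp.single (0,0) 1 + Finsupp.single (1,1) 1 with hb1
    set b2 : σ2 →₀ ℕ := Finsupp.single (0,1) 1 + Finsupp.single (1,0) 1 with hb2
    have e1 : dd (u + b1) = dd (u + b2) := by
      rw [hb1, hb2]; simp [dd_add, dd_single]
    have e2 : ii (u + b1) = ii (u + b2) := by
      rw [hb1, hb2]; simp [ii_add, ii_single]
    have e3 : jj (u + b1) = jj (u + b2) := by
      rw [hb1, hb2]; simp [jj_add, jj_single]
    have ht := tgt_congr k n e1 e2 e3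
    rw [D, mul_sub, X_mul_X, X_mul_X, ← hb1, ← hb2, monomial_mul, monomial_mul, map_sub,
      Phi_monomial, Phi_monomial, ht, sub_self]
  | add p q hp hq => rw [add_mul, map_add, hp, hq, add_zero]

lemma Phi_span_zero {s : Set (Rk k)} (hs : ∀ g ∈ s, ∀ r : Rk k, Φ k n (r * g) = 0)
    {f : Rk k} (hf : f ∈ Ideal.span s) : Φ k n f = 0 := by
  have H : ∀ r : Rk k, Φ k n (r * f) = 0 := by
    rw [Ideal.span] at hf
    refine Submodule.span_induction (p := fun x _ => ∀ r : Rk k, Φ k n (r * x) = 0)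
      hs ?_ ?_ ?_ hf
    · intro r; rw [mul_zero, map_zero]
    · intro x y _ _ ihx ihy r; rw [mul_add, map_add, ihx, ihy, add_zero]
    · intro c x _ ihx r; rw [smul_eq_mul, ← mul_assoc]; exact ihx _
  simpa using H 1

/-- products of `m` variables are monomials of degree `m` -/
lemma list_prod_X (m : ℕ) (g : Fin m → σ2) :
    ∃ b : σ2 →₀ ℕ, dd b = m ∧
      (List.ofFn fun i => (X (g i) : Rk k)).prod = monomial b 1 := by
  induction m with
  | zero => exact ⟨0, by simp [dd], by simp⟩
  | succ m ih =>
    obtain ⟨b, hb, hprod⟩ := ih (fun i => g i.succ)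
    refine ⟨Finsupp.single (g 0) 1 + b, by rw [dd_add, dd_single, hb, Nat.add_comm], ?_⟩
    rw [List.ofFn_succ, List.prod_cons, hprod, X, monomial_mul, one_mul]

/-- the reduced (normal form) exponent vector attached to an invariant triple -/
def rep (t : ℕ × ℕ × ℕ) : σ2 →₀ ℕ :=
  if t.1 ≤ t.2.1 + t.2.2 then
    Finsupp.single (0,0) (t.2.1 + t.2.2 - t.1) + Finsupp.single (0,1) (t.1 - t.2.2)
      + Finsupp.single (1,0) (t.1 - t.2.1)
  else
    Finsupp.single (0,1) t.2.1 + Finsupp.single (1,0) t.2.2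
      + Finsupp.single (1,1) (t.1 - t.2.1 - t.2.2)

lemma rep_apply00 (t : ℕ × ℕ × ℕ) :
    rep t (0,0) = if t.1 ≤ t.2.1 + t.2.2 then t.2.1 + t.2.2 - t.1 else 0 := by
  rw [rep]
  split <;> simp [Finsupp.add_apply, Finsupp.single_apply, Prod.ext_iff, Fin.ext_iff]

lemma rep_apply01 (t : ℕ × ℕ × ℕ) :
    rep t (0,1) = if t.1 ≤ t.2.1 + t.2.2 then t.1 - t.2.2 else t.2.1 := by
  rw [rep]
  split <;> simp [Finsupp.add_apply, Finsupp.single_apply, Prod.ext_iff, Fin.ext_iff]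

lemma rep_apply10 (t : ℕ × ℕ × ℕ) :
    rep t (1,0) = if t.1 ≤ t.2.1 + t.2.2 then t.1 - t.2.1 else t.2.2 := by
  rw [rep]
  split <;> simp [Finsupp.add_apply, Finsupp.single_apply, Prod.ext_iff, Fin.ext_iff]

lemma rep_apply11 (t : ℕ × ℕ × ℕ) :
    rep t (1,1) = if t.1 ≤ t.2.1 + t.2.2 then 0 else t.1 - t.2.1 - t.2.2 := by
  rw [rep]
  split <;> simp [Finsupp.add_apply, Finsupp.single_apply, Prod.ext_iff, Fin.ext_iff]

lemma dd_rep (t : ℕ × ℕ × ℕ) (hi : t.2.1 ≤ t.1) (hj : t.2.2 ≤ t.1) :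
    dd (rep t) = t.1 := by
  rw [dd_eq, rep_apply00, rep_apply01, rep_apply10, rep_apply11]
  split <;> omega

lemma ii_rep (t : ℕ × ℕ × ℕ) (hi : t.2.1 ≤ t.1) (hj : t.2.2 ≤ t.1) :
    ii (rep t) = t.2.1 := by
  rw [ii, rep_apply00, rep_apply01]
  split <;> omega

lemma jj_rep (t : ℕ × ℕ × ℕ) (hi : t.2.1 ≤ t.1) (hj : t.2.2 ≤ t.1) :
    jj (rep t) = t.2.2 := by
  rw [jj, rep_apply00, rep_apply10]
  split <;> omega

/-- every monomial is congruent to its normal form modulo the determinant -/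
lemma monomial_sub_rep_mem (M : ℕ) :
    ∀ (a : σ2 →₀ ℕ) (c : k), min (a (0,0)) (a (1,1)) ≤ M →
      monomial a c - monomial (rep (dd a, ii a, jj a)) c ∈ Ideal.span {D k} := by
  induction M with
  | zero =>
    intro a c hmin
    have hz : a (0,0) = 0 ∨ a (1,1) = 0 := by omega
    have : rep (dd a, ii a, jj a) = a := by
      have hdd := dd_eq a
      have h00 := rep_apply00 (dd a, ii a, jj a)
      have h01 := rep_apply01 (dd a, ii a, jj a)
      have h10 := rep_apply10 (dd a, ii a, jj a)
      have h11 := rep_apply11 (dd a, ii a, jj a)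
      ext w
      obtain ⟨x, y⟩ := w
      fin_cases x <;> fin_cases y
      · rw [show ((⟨0, by omega⟩ : Fin 2), (⟨0, by omega⟩ : Fin 2)) = ((0,0) : σ2) from rfl, h00]
        split_ifs at * <;> simp only [ii, jj] at * <;> omega
      · rw [show ((⟨0, by omega⟩ : Fin 2), (⟨1, by omega⟩ : Fin 2)) = ((0,1) : σ2) from rfl, h01]
        split_ifs at * <;> simp only [ii, jj] at * <;> omega
      · rw [show ((⟨1, by omega⟩ : Fin 2), (⟨0, by omega⟩ : Fin 2)) = ((1,0) : σ2) from rfl, h10]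
        split_ifs at * <;> simp only [ii, jj] at * <;> omega
      · rw [show ((⟨1, by omega⟩ : Fin 2), (⟨1, by omega⟩ : Fin 2)) = ((1,1) : σ2) from rfl, h11]
        split_ifs at * <;> simp only [ii, jj] at * <;> omega
    rw [this, sub_self]
    exact zero_mem _
  | succ M ih =>
    intro a c hmin
    by_cases hM : min (a (0,0)) (a (1,1)) ≤ M
    · exact ih a c hM
    · have h00 : 1 ≤ a (0,0) := by omega
      have h11 : 1 ≤ a (1,1) := by omega
      set b : σ2 →₀ ℕ := a - (Finsupp.single (0,0) 1 + Finsupp.single (1,1) 1) with hbdef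
      have hb : ∀ w : σ2, b w = a w
          - ((Finsupp.single ((0,0):σ2) 1) w + (Finsupp.single ((1,1):σ2) 1) w) := by
        intro w
        rw [hbdef, Finsupp.tsub_apply, Finsupp.add_apply]
      have hab : a = b + (Finsupp.single (0,0) 1 + Finsupp.single (1,1) 1) := by
        ext w
        rw [Finsupp.add_apply, hb w]
        obtain ⟨x, y⟩ := w
        fin_cases x <;> fin_cases y <;>
          simp [Finsupp.add_apply, Finsupp.single_apply, Prod.ext_iff, Fin.ext_iff] <;>
          omega
      set a' : σ2 →₀ ℕ := b + (Finsupp.single (0,1) 1 + Finsupp.single (1,0) 1) with ha'def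
      have hstep : monomial a c - monomial a' c ∈ Ideal.span {D k} := by
        refine Ideal.mem_span_singleton'.mpr ⟨monomial b c, ?_⟩
        rw [D, mul_sub, X_mul_X, X_mul_X, monomial_mul, monomial_mul, mul_one, hab]
      have hinv1 : dd a' = dd a := by rw [hab, ha'def]; simp [dd_add, dd_single]
      have hinv2 : ii a' = ii a := by rw [hab, ha'def]; simp [ii_add, ii_single]
      have hinv3 : jj a' = jj a := by rw [hab, ha'def]; simp [jj_add, jj_single]
      have hmin' : min (a' (0,0)) (a' (1,1)) ≤ M := by
        have e1 : a' (0,0) = a (0,0) - 1 := by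
          rw [ha'def, Finsupp.add_apply, hb]
          simp [Finsupp.add_apply, Finsupp.single_apply, Prod.ext_iff, Fin.ext_iff]
        have e2 : a' (1,1) = a (1,1) - 1 := by
          rw [ha'def, Finsupp.add_apply, hb]
          simp [Finsupp.add_apply, Finsupp.single_apply, Prod.ext_iff, Fin.ext_iff]
        omega
      have := ih a' c hmin'
      rw [hinv1, hinv2, hinv3] at this
      have := add_mem hstep this
      simpa using this

/-- monomials of degree at least `n` lie in the `n`-th power of the irrelevant ideal -/
lemma monomial_mem_pow {a : σ2 →₀ ℕ} (c : k) (h : n ≤ dd a) :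
    monomial a c ∈ (Ideal.span (Set.range (X : σ2 → Rk k))) ^ n := by
  set I := Ideal.span (Set.range (X : σ2 → Rk k)) with hI
  have key : ∀ s : Finset σ2, (∏ v ∈ s, (X v : Rk k) ^ a v) ∈ I ^ (∑ v ∈ s, a v) := by
    intro s
    induction s using Finset.induction_on with
    | empty => simp [Ideal.one_eq_top]
    | insert _ _ hvs ih =>
      rw [Finset.prod_insert hvs, Finset.sum_insert hvs, pow_add]
      exact Ideal.mul_mem_mul
        (Ideal.pow_mem_pow (Ideal.subset_span (Set.mem_range_self _)) _) ih
  have h1 : (monomial a c : Rk k) = C c * ∏ v ∈ a.support, (X v) ^ a v := by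
    rw [monomial_eq]; rfl
  have h2 : (∏ v ∈ a.support, (X v : Rk k) ^ a v) ∈ I ^ dd a := by
    have : dd a = ∑ v ∈ a.support, a v := rfl
    rw [this]; exact key _
  rw [h1]
  exact Ideal.pow_le_pow_right h (Ideal.mul_mem_left _ _ h2)


variable (q : ℕ)

/-- the full ideal of the statement -/
def J : Ideal (Rk k) :=
  Ideal.span (Set.range (X : σ2 → Rk k)) ^ n
    ⊔ Ideal.span (Set.range fun v : σ2 => (X v : Rk k) ^ q)
    ⊔ Ideal.span {D k}

lemma Phi_J_zero (hnq : n ≤ q) : ∀ f ∈ J k n q, Φ k n f = 0 := by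
  intro f hf
  rw [J] at hf
  obtain ⟨g, hg, h3, hh3, rfl⟩ := Submodule.mem_sup.mp hf
  obtain ⟨g1, hg1, g2, hg2, rfl⟩ := Submodule.mem_sup.mp hg
  have z1 : Φ k n g1 = 0 := by
    rw [Ideal.span, Submodule.span_pow] at hg1
    refine Phi_span_zero k n (s := (Set.range (X : σ2 → Rk k)) ^ n) ?_ hg1
    intro g hgmem r
    obtain ⟨ff, hff⟩ := Set.mem_pow.mp hgmem
    have hch : ∀ i : Fin n, ∃ v : σ2, (X v : Rk k) = (ff i : Rk k) := fun i => (ff i).2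
    choose vf hvf using hch
    have hl : (List.ofFn fun i => ((ff i : Rk k))) = List.ofFn fun i => (X (vf i) : Rk k) := by
      congr 1
      funext i
      rw [hvf]
    obtain ⟨b, hb, hprod⟩ := list_prod_X k n vf
    rw [← hff, hl, hprod]
    exact Phi_mul_monomial k n (le_of_eq hb.symm) _ _
  have z2 : Φ k n g2 = 0 := by
    refine Phi_span_zero k n ?_ hg2
    rintro g ⟨v, rfl⟩ r
    show Φ k n (r * ((X v : Rk k) ^ q)) = 0
    rw [X_pow_eq_monomial]
    exact Phi_mul_monomial k n (by rw [dd_single]; omega) _ _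
  have z3 : Φ k n h3 = 0 := by
    refine Phi_span_zero k n ?_ hh3
    rintro g rfl r
    exact Phi_mul_D k n r
  rw [map_add, map_add, z1, z2, z3, add_zero, add_zero]

/-- section of the quotient map -/
def Ψ₀ : (W n →₀ k) →ₗ[k] Rk k :=
  Finsupp.lsum k fun t : W n => (monomial (rep t.1) : k →ₗ[k] Rk k)

lemma Psi0_single (t : W n) (c : k) :
    Ψ₀ k n (Finsupp.single t c) = monomial (rep t.1) c := by
  rw [Ψ₀, Finsupp.lsum_single]

lemma Phi_Psi0 (x : W n →₀ k) : Φ k n (Ψ₀ k n x) = x := by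
  have : (Φ k n).comp (Ψ₀ k n) = LinearMap.id := by
    apply Finsupp.lhom_ext
    intro t c
    rw [LinearMap.comp_apply, Psi0_single, LinearMap.id_apply]
    obtain ⟨⟨d, i, j⟩, hd, hi, hj⟩ := t
    rw [Phi_monomial_of_lt k n (by rw [dd_rep _ hi hj]; exact hd)]
    congr 1
    apply Subtype.ext
    simp only [mkW]
    exact Prod.ext (dd_rep _ hi hj) (Prod.ext (ii_rep _ hi hj) (jj_rep _ hi hj))
  calc Φ k n (Ψ₀ k n x) = ((Φ k n).comp (Ψ₀ k n)) x := rfl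
  _ = x := by rw [this]; rfl

/-- the quotient-map section composed with the projection -/
def Ψ : (W n →₀ k) →ₗ[k] (Rk k ⧸ J k n q) :=
  (Ideal.Quotient.mkₐ k (J k n q)).toLinearMap.comp (Ψ₀ k n)

lemma Psi_bijective (hnq : n ≤ q) : Function.Bijective (Ψ k n q) := by
  constructor
  · intro x y hxy
    have h0 : Ψ₀ k n x - Ψ₀ k n y ∈ J k n q := by
      rw [← Ideal.Quotient.eq]
      exact hxy
    have := Phi_J_zero k n q hnq _ h0
    rw [map_sub, Phi_Psi0, Phi_Psi0, sub_eq_zero] at this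
    exact this
  · intro y
    obtain ⟨f, rfl⟩ := Ideal.Quotient.mk_surjective y
    suffices h : Ideal.Quotient.mk (J k n q) f ∈ LinearMap.range (Ψ k n q) by
      obtain ⟨x, hx⟩ := h
      exact ⟨x, hx⟩
    induction f using MvPolynomial.induction_on' with
    | monomial a c =>
      by_cases h : dd a < n
      · refine ⟨Finsupp.single (mkW a h) c, ?_⟩
        rw [Ψ, LinearMap.comp_apply, Psi0_single]
        show Ideal.Quotient.mkₐ k (J k n q) _ = _
        rw [Ideal.Quotient.mkₐ_eq_mk]
        rw [Ideal.Quotient.eq]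
        have hD : monomial a c - monomial (rep (dd a, ii a, jj a)) c ∈ Ideal.span {D k} :=
          monomial_sub_rep_mem k (a (0,0)) a c (min_le_left _ _)
        have hmem : monomial a c - monomial (rep (dd a, ii a, jj a)) c ∈ J k n q :=
          Submodule.mem_sup_right hD
        rw [show ((dd a, ii a, jj a) : ℕ × ℕ × ℕ) = (mkW a h).1 from rfl] at hmem
        have hneg := (J k n q).neg_mem hmem
        rw [neg_sub] at hneg
        exact hneg
      · have hmem : monomial a c ∈ J k n q := by
          have h1 : monomial a c ∈ (Ideal.span (Set.range (X : σ2 → Rk k))) ^ n :=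
            monomial_mem_pow k n c (by omega)
          exact Submodule.mem_sup_left (Submodule.mem_sup_left h1)
        rw [Ideal.Quotient.eq_zero_iff_mem.mpr hmem]
        exact zero_mem _
    | add f g hf hg =>
      rw [RingHom.map_add]
      exact add_mem hf hg

/-- enumeration of the index set -/
def WE : W n ≃ Σ d : Fin n, Fin (d + 1) × Fin (d + 1) where
  toFun := fun ⟨⟨d, i, j⟩, hd, hi, hj⟩ =>
    ⟨⟨d, hd⟩, ⟨i, Nat.lt_succ_of_le hi⟩, ⟨j, Nat.lt_succ_of_le hj⟩⟩
  invFun := fun ⟨⟨d, hd⟩, ⟨i, hi⟩, ⟨j, hj⟩⟩ =>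
    ⟨(d, i, j), hd, Nat.le_of_lt_succ hi, Nat.le_of_lt_succ hj⟩
  left_inv := fun ⟨⟨d, i, j⟩, hd, hi, hj⟩ => rfl
  right_inv := fun ⟨⟨d, hd⟩, ⟨i, hi⟩, ⟨j, hj⟩⟩ => rfl

instance : Fintype (W n) := Fintype.ofEquiv _ (WE n).symm

lemma card_W : Fintype.card (W n) = ∑ i ∈ Finset.range n, (i + 1) * (i + 1) := by
  rw [Fintype.card_congr (WE n), Fintype.card_sigma]
  rw [← Fin.sum_univ_eq_sum_range (fun i => (i + 1) * (i + 1)) n]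
  congr 1
  funext d
  rw [Fintype.card_prod, Fintype.card_fin]

lemma sum_sq (m : ℕ) :
    6 * ∑ i ∈ Finset.range m, (i + 1) * (i + 1) = m * (m + 1) * (2 * m + 1) := by
  induction m with
  | zero => simp
  | succ m ih => rw [Finset.sum_range_succ, Nat.mul_add, ih]; ring

lemma finrank_quotient (hnq : n ≤ q) :
    Module.finrank k (Rk k ⧸ J k n q) = ∑ i ∈ Finset.range n, (i + 1) * (i + 1) := by
  have e1 : (Rk k ⧸ J k n q) ≃ₗ[k] (W n →₀ k) :=
    (LinearEquiv.ofBijective (Ψ k n q) (Psi_bijective k n q hnq)).symm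
  have e2 : (W n →₀ k) ≃ₗ[k] (W n → k) := Finsupp.linearEquivFunOnFinite k k (W n)
  rw [e1.finrank_eq, e2.finrank_eq, Module.finrank_fintype_fun_eq_card, card_W]

end

end Stmt15Aux

/-- For `X` a `2×2` matrix of variables over a field `k` of characteristic `p`,
`q = pᵉ`, and `0 < s ≤ 1` with `sq ∈ ℤ`, the `k`-dimension of
`k[X]/(𝔪^{sq} + 𝔪^{[q]} + I₂(X))` equals `(s³/3)q³ + (s²/2)q² + (s/6)q`. -/
theorem stmt15 (k : Type*) [Field k] (p : ℕ) (hp : p.Prime) [CharP k p] (e : ℕ)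
    (s : ℝ) (hs0 : 0 < s) (hs1 : s ≤ 1) (sq : ℕ) (hsq : (sq : ℝ) = s * (p : ℝ) ^ e) :
    (Module.finrank k
      (MvPolynomial (Fin 2 × Fin 2) k ⧸
        (Ideal.span (Set.range (MvPolynomial.X : Fin 2 × Fin 2 → MvPolynomial (Fin 2 × Fin 2) k)) ^ sq
          ⊔ Ideal.span (Set.range fun v : Fin 2 × Fin 2 =>
              (MvPolynomial.X v : MvPolynomial (Fin 2 × Fin 2) k) ^ p ^ e)
          ⊔ Ideal.span {(MvPolynomial.X (0, 0) * MvPolynomial.X (1, 1) -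
              MvPolynomial.X (0, 1) * MvPolynomial.X (1, 0) :
                MvPolynomial (Fin 2 × Fin 2) k)})) : ℝ)
    = s ^ 3 / 3 * ((p : ℝ) ^ e) ^ 3 + s ^ 2 / 2 * ((p : ℝ) ^ e) ^ 2
        + s / 6 * (p : ℝ) ^ e := by
  classical
  have hp1 : 1 ≤ p := hp.pos
  have hq1 : (1:ℝ) ≤ (p : ℝ) ^ e := one_le_pow₀ (by exact_mod_cast hp1)
  have hqpos : (0:ℝ) < (p : ℝ) ^ e := by linarith
  have hnq : sq ≤ p ^ e := by
    have : (sq : ℝ) ≤ ((p ^ e : ℕ) : ℝ) := by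
      rw [hsq]
      push_cast
      nlinarith
    exact_mod_cast this
  have key := Stmt15Aux.finrank_quotient k sq (p ^ e) hnq
  have hJ : (Ideal.span (Set.range (MvPolynomial.X : Fin 2 × Fin 2 → MvPolynomial (Fin 2 × Fin 2) k)) ^ sq
          ⊔ Ideal.span (Set.range fun v : Fin 2 × Fin 2 =>
              (MvPolynomial.X v : MvPolynomial (Fin 2 × Fin 2) k) ^ p ^ e)
          ⊔ Ideal.span {(MvPolynomial.X (0, 0) * MvPolynomial.X (1, 1) -
              MvPolynomial.X (0, 1) * MvPolynomial.X (1, 0) :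
                MvPolynomial (Fin 2 × Fin 2) k)}) = Stmt15Aux.J k sq (p ^ e) := rfl
  rw [hJ, key]
  have h6 := Stmt15Aux.sum_sq sq
  have h6R : 6 * ((∑ i ∈ Finset.range sq, (i + 1) * (i + 1) : ℕ) : ℝ)
      = (sq : ℝ) * ((sq : ℝ) + 1) * (2 * (sq : ℝ) + 1) := by
    exact_mod_cast congrArg (Nat.cast : ℕ → ℝ) h6
  have hrhs : s ^ 3 / 3 * ((p : ℝ) ^ e) ^ 3 + s ^ 2 / 2 * ((p : ℝ) ^ e) ^ 2
        + s / 6 * (p : ℝ) ^ e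
      = (sq : ℝ) * ((sq : ℝ) + 1) * (2 * (sq : ℝ) + 1) / 6 := by
    rw [hsq]; ring
  rw [hrhs]
  linarith
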